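/- Given any n-dimensional convex compact polytope P in R^n with vertex set V, the map ψ_P from the open positive orthant R^n_+ to the interior of P defined by ψ_P(x) = (sum_{p in V} p·x^p) / (sum_{q in V} x^q) is a real analytic diffeomorphism from R^n_+ onto the interior of P. -/

import Mathlib

/-- The momentum-like map `ψ_P(x) = (∑_{p ∈ V} x^p • p) / (∑_{q ∈ V} x^q)` associated
to a finite set `V` of points of `ℝⁿ`. -/
noncomputable def psi17 (n : ℕ) (V : Finset (Fin n → ℝ)) :
    (Fin n → ℝ) → (Fin n → ℝ) := fun x =>
  (∑ q ∈ V, ∏ j, x j ^ q j)⁻¹ • ∑ p ∈ V, (∏ j, x j ^ p j) • p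


open Finset

def mmDot {n : ℕ} (v w : Fin n → ℝ) : ℝ := ∑ j, v j * w j

noncomputable def mmW {n : ℕ} (V : Finset (Fin n → ℝ)) (z : Fin n → ℝ) : ℝ :=
  ∑ p ∈ V, Real.exp (mmDot p z)

noncomputable def mmPhi {n : ℕ} (V : Finset (Fin n → ℝ)) (z : Fin n → ℝ) : Fin n → ℝ :=
  (mmW V z)⁻¹ • ∑ p ∈ V, Real.exp (mmDot p z) • p

lemma mmDot_add_smul {n : ℕ} (p z d : Fin n → ℝ) (t : ℝ) :
    mmDot p (z + t • d) = mmDot p z + t * mmDot p d := by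
  simp only [mmDot, Pi.add_apply, Pi.smul_apply, smul_eq_mul, mul_add, Finset.sum_add_distrib,
    Finset.mul_sum]
  congr 1
  exact Finset.sum_congr rfl fun j _ => by ring

lemma mmDot_smul_left {n : ℕ} (c : ℝ) (v w : Fin n → ℝ) : mmDot (c • v) w = c * mmDot v w := by
  simp [mmDot, Finset.mul_sum, mul_assoc]

lemma mmDot_add_left {n : ℕ} (u v w : Fin n → ℝ) : mmDot (u + v) w = mmDot u w + mmDot v w := by
  simp [mmDot, add_mul, Finset.sum_add_distrib]

lemma mmDot_sum_left {n : ℕ} {ι : Type*} (s : Finset ι) (f : ι → Fin n → ℝ) (w : Fin n → ℝ) :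
    mmDot (∑ i ∈ s, f i) w = ∑ i ∈ s, mmDot (f i) w := by
  simp only [mmDot, Finset.sum_apply, Finset.sum_mul]
  exact Finset.sum_comm

lemma isLinearMap_mmDot_right {n : ℕ} (d : Fin n → ℝ) :
    IsLinearMap ℝ (fun v : Fin n → ℝ => mmDot v d) := by
  constructor
  · intro u v; exact mmDot_add_left u v d
  · intro c u; exact mmDot_smul_left c u d

lemma mmDot_single {n : ℕ} (v : Fin n → ℝ) (i : Fin n) : mmDot v (Pi.single i 1) = v i := by
  simp [mmDot, Pi.single_apply, mul_ite, Finset.sum_ite_eq]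

lemma mmDot_self_pos {n : ℕ} {d : Fin n → ℝ} (hd : d ≠ 0) : 0 < mmDot d d := by
  obtain ⟨i, hi⟩ := Function.ne_iff.mp hd
  refine Finset.sum_pos' (fun j _ => mul_self_nonneg _) ⟨i, Finset.mem_univ i, ?_⟩
  exact mul_self_pos.mpr hi

lemma mmW_pos {n : ℕ} {V : Finset (Fin n → ℝ)} (hV : V.Nonempty) (z : Fin n → ℝ) :
    0 < mmW V z :=
  Finset.sum_pos (fun p _ => Real.exp_pos _) hV

section Line
variable {n : ℕ} {V : Finset (Fin n → ℝ)}

lemma hasDerivAt_lineD (a b : (Fin n → ℝ) → ℝ) (t : ℝ) :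
    HasDerivAt (fun s => ∑ p ∈ V, Real.exp (a p + s * b p))
      (∑ p ∈ V, Real.exp (a p + t * b p) * b p) t := by
  apply HasDerivAt.fun_sum
  intro p _
  exact (((hasDerivAt_mul_const (b p)).const_add (a p)).exp)

lemma hasDerivAt_lineN (a b : (Fin n → ℝ) → ℝ) (t : ℝ) :
    HasDerivAt (fun s => ∑ p ∈ V, b p * Real.exp (a p + s * b p))
      (∑ p ∈ V, b p * (Real.exp (a p + t * b p) * b p)) t := by
  apply HasDerivAt.fun_sum
  intro p _
  exact (((hasDerivAt_mul_const (b p)).const_add (a p)).exp).const_mul (b p)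

lemma variance_pos (w b : (Fin n → ℝ) → ℝ) (hw : ∀ p ∈ V, 0 < w p)
    (hb : ∃ p ∈ V, ∃ q ∈ V, b p ≠ b q) :
    0 < (∑ p ∈ V, b p * b p * w p) * (∑ p ∈ V, w p) - (∑ p ∈ V, b p * w p) ^ 2 := by
  have key : ∑ p ∈ V, ∑ q ∈ V, (b p - b q) ^ 2 * (w p * w q)
      = 2 * ((∑ p ∈ V, b p * b p * w p) * (∑ p ∈ V, w p) - (∑ p ∈ V, b p * w p) ^ 2) := by
    have e : ∀ f g : (Fin n → ℝ) → ℝ, ∑ p ∈ V, ∑ q ∈ V, f p * g q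
        = (∑ p ∈ V, f p) * (∑ q ∈ V, g q) := fun f g => (Finset.sum_mul_sum V V f g).symm
    have h1 : ∑ p ∈ V, ∑ q ∈ V, (b p - b q) ^ 2 * (w p * w q)
        = ∑ p ∈ V, ∑ q ∈ V, ((fun r => b r * b r * w r) p * w q
            + w p * ((fun r => b r * b r * w r) q)
            - (fun r => 2 * (b r * w r)) p * ((fun r => b r * w r) q)) :=
      Finset.sum_congr rfl fun p _ => Finset.sum_congr rfl fun q _ => by ring
    rw [h1]
    simp only [Finset.sum_add_distrib, Finset.sum_sub_distrib]
    rw [e, e, e]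
    have : ∑ p ∈ V, 2 * (b p * w p) = 2 * ∑ p ∈ V, b p * w p := by
      rw [Finset.mul_sum]
    rw [this]
    ring
  have hpos : 0 < ∑ p ∈ V, ∑ q ∈ V, (b p - b q) ^ 2 * (w p * w q) := by
    obtain ⟨p, hp, q, hq, hne⟩ := hb
    refine Finset.sum_pos' (fun r hr => Finset.sum_nonneg fun s hs => ?_) ⟨p, hp, ?_⟩
    · exact mul_nonneg (sq_nonneg _) (mul_nonneg (hw r hr).le (hw s hs).le)
    · refine Finset.sum_pos' (fun s hs => mul_nonneg (sq_nonneg _)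
        (mul_nonneg (hw p hp).le (hw s hs).le)) ⟨q, hq, ?_⟩
      have : 0 < (b p - b q) ^ 2 := by
        rw [sq]; exact mul_self_pos.mpr (sub_ne_zero.mpr hne)
      exact mul_pos this (mul_pos (hw p hp) (hw q hq))
  linarith [key ▸ hpos]

lemma lineQuot_hasDerivAt (a b : (Fin n → ℝ) → ℝ) (hV : V.Nonempty) (t : ℝ) :
    HasDerivAt (fun s => (∑ p ∈ V, b p * Real.exp (a p + s * b p))
        / (∑ p ∈ V, Real.exp (a p + s * b p)))
      (((∑ p ∈ V, b p * (Real.exp (a p + t * b p) * b p))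
          * (∑ p ∈ V, Real.exp (a p + t * b p))
        - (∑ p ∈ V, b p * Real.exp (a p + t * b p))
          * (∑ p ∈ V, Real.exp (a p + t * b p) * b p))
        / (∑ p ∈ V, Real.exp (a p + t * b p)) ^ 2) t :=
  (hasDerivAt_lineN a b t).div (hasDerivAt_lineD a b t)
    (ne_of_gt (Finset.sum_pos (fun p _ => Real.exp_pos _) hV))

lemma lineQuot_strictMono (a b : (Fin n → ℝ) → ℝ) (hV : V.Nonempty)
    (hb : ∃ p ∈ V, ∃ q ∈ V, b p ≠ b q) :
    StrictMono (fun s => (∑ p ∈ V, b p * Real.exp (a p + s * b p))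
        / (∑ p ∈ V, Real.exp (a p + s * b p))) := by
  apply strictMono_of_deriv_pos
  intro t
  rw [(lineQuot_hasDerivAt a b hV t).deriv]
  apply div_pos
  · have h1 : ∑ p ∈ V, b p * (Real.exp (a p + t * b p) * b p)
        = ∑ p ∈ V, b p * b p * Real.exp (a p + t * b p) :=
      Finset.sum_congr rfl fun p _ => by ring
    have h2 : ∑ p ∈ V, Real.exp (a p + t * b p) * b p
        = ∑ p ∈ V, b p * Real.exp (a p + t * b p) :=
      Finset.sum_congr rfl fun p _ => by ring
    rw [h1, h2, ← sq]
    exact variance_pos _ b (fun p _ => Real.exp_pos _) hb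
  · have := Finset.sum_pos (fun p (_ : p ∈ V) => Real.exp_pos (a p + t * b p)) hV
    positivity

end Line

section Main
variable {n : ℕ} {V : Finset (Fin n → ℝ)}

lemma V_nonempty (hdim : (interior (convexHull ℝ (V : Set (Fin n → ℝ)))).Nonempty) :
    V.Nonempty := by
  rcases V.eq_empty_or_nonempty with rfl | h
  · simp at hdim
  · exact h

lemma mmPhi_line (z d : Fin n → ℝ) (t : ℝ) :
    mmDot (mmPhi V (z + t • d)) d
      = (∑ p ∈ V, mmDot p d * Real.exp (mmDot p z + t * mmDot p d))
        / (∑ p ∈ V, Real.exp (mmDot p z + t * mmDot p d)) := by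
  unfold mmPhi mmW
  rw [mmDot_smul_left, mmDot_sum_left]
  simp_rw [mmDot_smul_left, mmDot_add_smul]
  rw [div_eq_inv_mul]
  congr 1
  exact Finset.sum_congr rfl fun p _ => mul_comm _ _

lemma exists_dot_ne (hdim : (interior (convexHull ℝ (V : Set (Fin n → ℝ)))).Nonempty)
    {d : Fin n → ℝ} (hd : d ≠ 0) : ∃ p ∈ V, ∃ q ∈ V, mmDot p d ≠ mmDot q d := by
  by_contra hcon
  push_neg at hcon
  obtain ⟨p₀, hp₀⟩ := V_nonempty hdim
  set c := mmDot p₀ d with hc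
  have hsub : convexHull ℝ (V : Set (Fin n → ℝ)) ⊆ {y | mmDot y d = c} :=
    convexHull_min (fun p hp => hcon p hp p₀ hp₀) (convex_hyperplane (isLinearMap_mmDot_right d) c)
  obtain ⟨y, hy⟩ := hdim
  have hy' : y ∈ interior {y : Fin n → ℝ | mmDot y d = c} := interior_mono hsub hy
  rw [mem_interior_iff_mem_nhds, Metric.mem_nhds_iff] at hy'
  obtain ⟨ε, hε, hball⟩ := hy'
  have hdn : 0 < ‖d‖ := norm_pos_iff.mpr hd
  set δ := ε / (2 * ‖d‖) with hδdef
  have hδ : 0 < δ := by positivity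
  have hmem : y + δ • d ∈ Metric.ball y ε := by
    rw [Metric.mem_ball, dist_eq_norm, add_sub_cancel_left, norm_smul, Real.norm_eq_abs,
      abs_of_pos hδ]
    have h2 : δ * ‖d‖ = ε / 2 := by rw [hδdef, div_mul_eq_mul_div, div_eq_div_iff (by positivity) (by norm_num)]; ring
    linarith
  have h1 : mmDot (y + δ • d) d = c := hball hmem
  have h0 : mmDot y d = c := hball (Metric.mem_ball_self hε)
  rw [mmDot_add_left, mmDot_smul_left, h0] at h1
  have := mmDot_self_pos hd
  nlinarith

lemma mmPhi_injective (hdim : (interior (convexHull ℝ (V : Set (Fin n → ℝ)))).Nonempty) :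
    Function.Injective (mmPhi V) := by
  have hVne := V_nonempty hdim
  intro z₁ z₂ hz
  by_contra hne
  have hd0 : z₂ - z₁ ≠ 0 := sub_ne_zero.mpr (Ne.symm hne)
  obtain hb := exists_dot_ne hdim hd0
  have hmono := lineQuot_strictMono (V := V) (fun p => mmDot p z₁)
    (fun p => mmDot p (z₂ - z₁)) hVne hb
  have key := hmono (show (0:ℝ) < 1 by norm_num)
  have e0 : z₁ + (0:ℝ) • (z₂ - z₁) = z₁ := by simp
  have e1 : z₁ + (1:ℝ) • (z₂ - z₁) = z₂ := by simp
  have q0 := mmPhi_line (V := V) z₁ (z₂ - z₁) 0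
  have q1 := mmPhi_line (V := V) z₁ (z₂ - z₁) 1
  rw [e0] at q0
  rw [e1] at q1
  simp only at key
  rw [← q0, ← q1, hz] at key
  exact lt_irrefl _ key

end Main

section Interior
variable {n : ℕ} {V : Finset (Fin n → ℝ)}

lemma mmPhi_eq_sum_smul (z : Fin n → ℝ) :
    mmPhi V z = ∑ p ∈ V, ((mmW V z)⁻¹ * Real.exp (mmDot p z)) • p := by
  unfold mmPhi
  rw [Finset.smul_sum]
  exact Finset.sum_congr rfl fun p _ => smul_smul ((mmW V z)⁻¹) (Real.exp (mmDot p z)) p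

lemma mmWeights_sum (hVne : V.Nonempty) (z : Fin n → ℝ) :
    ∑ p ∈ V, (mmW V z)⁻¹ * Real.exp (mmDot p z) = 1 := by
  rw [← Finset.mul_sum]
  exact inv_mul_cancel₀ (ne_of_gt (mmW_pos hVne z))

lemma mmPhi_mem_interior (hdim : (interior (convexHull ℝ (V : Set (Fin n → ℝ)))).Nonempty)
    (z : Fin n → ℝ) : mmPhi V z ∈ interior (convexHull ℝ (V : Set (Fin n → ℝ))) := by
  have hVne := V_nonempty hdim
  set w : (Fin n → ℝ) → ℝ := fun p => (mmW V z)⁻¹ * Real.exp (mmDot p z) with hwdef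
  have hw : ∀ p ∈ V, 0 < w p := fun p _ =>
    mul_pos (inv_pos.mpr (mmW_pos hVne z)) (Real.exp_pos _)
  have hwsum : ∑ p ∈ V, w p = 1 := mmWeights_sum hVne z
  obtain ⟨y₀, hy₀⟩ := hdim
  have hy₀hull : y₀ ∈ convexHull ℝ (V : Set (Fin n → ℝ)) := interior_subset hy₀
  rw [Finset.convexHull_eq] at hy₀hull
  obtain ⟨cw, hc0, hcsum, hccm⟩ := hy₀hull
  have hy₀eq : y₀ = ∑ p ∈ V, cw p • p := by
    rw [← hccm, Finset.centerMass_eq_of_sum_1 _ _ hcsum]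
    rfl
  set m := V.inf' hVne w with hmdef
  have hm_pos : 0 < m := (Finset.lt_inf'_iff _).mpr (fun p hp => hw p hp)
  have hm_le : ∀ p ∈ V, m ≤ w p := fun p hp => Finset.inf'_le _ hp
  obtain ⟨p₀, hp₀⟩ := hVne
  have hm1 : m ≤ 1 := by
    calc m ≤ w p₀ := hm_le p₀ hp₀
    _ ≤ ∑ p ∈ V, w p := Finset.single_le_sum (fun p hp => (hw p hp).le) hp₀
    _ = 1 := hwsum
  set t := m / 2 with htdef
  have ht : 0 < t := by positivity
  have ht1 : t < 1 := by simp only [htdef]; linarith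
  have h1t : (0:ℝ) < 1 - t := by linarith
  set e : (Fin n → ℝ) → ℝ := fun p => (w p - t * cw p) / (1 - t) with hedef
  have hcle : ∀ p ∈ V, cw p ≤ 1 := by
    intro p hp
    calc cw p ≤ ∑ q ∈ V, cw q := Finset.single_le_sum hc0 hp
    _ = 1 := hcsum
  have he0 : ∀ p ∈ V, 0 ≤ e p := by
    intro p hp
    apply div_nonneg _ h1t.le
    have := hm_le p hp
    have := hcle p hp
    nlinarith
  have hesum : ∑ p ∈ V, e p = 1 := by
    simp only [hedef]
    rw [← Finset.sum_div, Finset.sum_sub_distrib, ← Finset.mul_sum]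
    rw [show ∑ p ∈ V, t * cw p = t * ∑ p ∈ V, cw p from (Finset.mul_sum _ _ _).symm, hcsum]
    have hW : (mmW V z)⁻¹ * ∑ i ∈ V, Real.exp (mmDot i z) = 1 :=
      inv_mul_cancel₀ (ne_of_gt (mmW_pos ⟨p₀, hp₀⟩ z))
    rw [hW]
    field_simp
  set u := ∑ p ∈ V, e p • p with hudef
  have hu : u ∈ convexHull ℝ (V : Set (Fin n → ℝ)) := by
    rw [Finset.convexHull_eq]
    exact ⟨e, he0, hesum, by rw [Finset.centerMass_eq_of_sum_1 _ _ hesum]; rfl⟩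
  have hkey : mmPhi V z = t • y₀ + (1 - t) • u := by
    rw [mmPhi_eq_sum_smul, hy₀eq, hudef, Finset.smul_sum, Finset.smul_sum,
      ← Finset.sum_add_distrib]
    refine Finset.sum_congr rfl fun p hp => ?_
    rw [smul_smul, smul_smul, ← add_smul]
    congr 1
    simp only [hedef]
    field_simp
    ring
  rw [hkey]
  exact (convex_convexHull ℝ _).combo_interior_self_mem_interior hy₀ hu ht h1t.le
    (by ring)

end Interior

section Surj
variable {n : ℕ} {V : Finset (Fin n → ℝ)}

lemma norm_sq_le_mmDot_self (z : Fin n → ℝ) : ‖z‖ ^ 2 ≤ mmDot z z := by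
  rcases eq_or_ne z 0 with rfl | hz
  · simp [mmDot]
  · obtain ⟨i, hi⟩ := Function.ne_iff.mp hz
    have : Nonempty (Fin n) := ⟨i⟩
    obtain ⟨i₀, hi₀⟩ := Finite.exists_max (fun j => |z j|)
    have hnorm : ‖z‖ ≤ |z i₀| := by
      rw [show |z i₀| = ‖z i₀‖ from rfl]
      exact (pi_norm_le_iff_of_nonneg (norm_nonneg _)).mpr fun j => hi₀ j
    calc ‖z‖ ^ 2 ≤ z i₀ ^ 2 := by
          rw [← sq_abs (z i₀)]
          exact pow_le_pow_left₀ (norm_nonneg _) hnorm 2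
    _ = z i₀ * z i₀ := sq (z i₀) ▸ by ring
    _ ≤ mmDot z z := Finset.single_le_sum (f := fun j => z j * z j)
          (fun j _ => mul_self_nonneg _) (Finset.mem_univ i₀)

lemma mmDot_le_sup (hVne : V.Nonempty) (z : Fin n → ℝ) :
    ∀ u ∈ convexHull ℝ (V : Set (Fin n → ℝ)),
      mmDot u z ≤ V.sup' hVne (fun p => mmDot p z) := by
  intro u hu
  have : convexHull ℝ (V : Set (Fin n → ℝ))
      ⊆ {v : Fin n → ℝ | mmDot v z ≤ V.sup' hVne (fun p => mmDot p z)} :=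
    convexHull_min (fun p hp => by
      exact Finset.le_sup' (f := fun q => mmDot q z) (Finset.mem_coe.mp hp))
      (convex_halfSpace_le (isLinearMap_mmDot_right z) _)
  exact this hu

lemma sup_le_log_mmW (hVne : V.Nonempty) (z : Fin n → ℝ) :
    V.sup' hVne (fun p => mmDot p z) ≤ Real.log (mmW V z) := by
  obtain ⟨p, hp, hep⟩ := Finset.exists_mem_eq_sup' hVne (fun p => mmDot p z)
  rw [hep]
  have h1 : Real.exp (mmDot p z) ≤ mmW V z :=
    Finset.single_le_sum (f := fun q => Real.exp (mmDot q z))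
      (fun q _ => (Real.exp_pos _).le) hp
  calc mmDot p z = Real.log (Real.exp (mmDot p z)) := (Real.log_exp _).symm
  _ ≤ Real.log (mmW V z) := Real.log_le_log (Real.exp_pos _) h1

lemma mmW_continuous : Continuous (mmW V) := by
  apply continuous_finset_sum
  intro p _
  exact Real.continuous_exp.comp
    (continuous_finset_sum _ fun j _ => continuous_const.mul (continuous_apply j))

lemma mmDot_continuous_right (y : Fin n → ℝ) : Continuous (fun z : Fin n → ℝ => mmDot y z) :=
  continuous_finset_sum _ fun j _ => continuous_const.mul (continuous_apply j)

lemma mmPhi_surjOn (hdim : (interior (convexHull ℝ (V : Set (Fin n → ℝ)))).Nonempty) :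
    ∀ y ∈ interior (convexHull ℝ (V : Set (Fin n → ℝ))), ∃ z, mmPhi V z = y := by
  have hVne := V_nonempty hdim
  intro y hy
  obtain ⟨ε, hε, hball⟩ := Metric.mem_nhds_iff.mp (mem_interior_iff_mem_nhds.mp hy)
  set G : (Fin n → ℝ) → ℝ := fun z => Real.log (mmW V z) - mmDot y z with hGdef
  have hGcont : Continuous G := by
    apply Continuous.sub _ (mmDot_continuous_right y)
    rw [continuous_iff_continuousAt]
    intro z
    exact (Real.continuousAt_log (ne_of_gt (mmW_pos hVne z))).comp mmW_continuous.continuousAt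
  have hGlower : ∀ z, ε / 2 * ‖z‖ ≤ G z := by
    intro z
    rcases eq_or_ne z 0 with rfl | hz
    · have h0 : mmDot y 0 = 0 := by simp [mmDot]
      have hW0 : mmW V (0 : Fin n → ℝ) = V.card := by
        unfold mmW
        have h1 : ∀ p ∈ V, Real.exp (mmDot p 0) = 1 := fun p _ => by simp [mmDot]
        rw [Finset.sum_congr rfl h1, Finset.sum_const, nsmul_eq_mul, mul_one]
      simp only [hGdef, h0, norm_zero, mul_zero, sub_zero, hW0]
      exact Real.log_nonneg (by exact_mod_cast Finset.card_pos.mpr hVne)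
    · have hznorm : 0 < ‖z‖ := norm_pos_iff.mpr hz
      set u := y + (ε / 2 * ‖z‖⁻¹) • z with hudef
      have humem : u ∈ Metric.ball y ε := by
        rw [Metric.mem_ball, dist_eq_norm, hudef, add_sub_cancel_left, norm_smul,
          Real.norm_eq_abs, abs_of_pos (by positivity)]
        rw [mul_assoc, inv_mul_cancel₀ (ne_of_gt hznorm), mul_one]
        linarith
      have hdotu : mmDot u z ≤ Real.log (mmW V z) :=
        le_trans (mmDot_le_sup hVne z u (hball humem)) (sup_le_log_mmW hVne z)
      have hexp : mmDot u z = mmDot y z + (ε / 2 * ‖z‖⁻¹) * mmDot z z := by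
        rw [hudef, mmDot_add_left, mmDot_smul_left]
      have hlow : mmDot y z + ε / 2 * ‖z‖ ≤ mmDot u z := by
        rw [hexp]
        have h1 : ‖z‖ ^ 2 ≤ mmDot z z := norm_sq_le_mmDot_self z
        have h2 : ε / 2 * ‖z‖ ≤ ε / 2 * ‖z‖⁻¹ * mmDot z z := by
          have : ε / 2 * ‖z‖ = ε / 2 * ‖z‖⁻¹ * ‖z‖ ^ 2 := by field_simp
          rw [this]
          have hc : (0:ℝ) ≤ ε / 2 * ‖z‖⁻¹ := by positivity
          nlinarith
        linarith
      simp only [hGdef]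
      linarith
  have htend : Filter.Tendsto G (Filter.cocompact _) Filter.atTop := by
    apply Filter.tendsto_atTop_mono hGlower
    exact (tendsto_norm_cocompact_atTop).const_mul_atTop (by positivity)
  obtain ⟨z₀, hz₀⟩ := hGcont.exists_forall_le htend
  refine ⟨z₀, ?_⟩
  have hdir : ∀ d, mmDot (mmPhi V z₀) d = mmDot y d := by
    intro d
    set F1 : ℝ → ℝ := fun t =>
      Real.log (∑ p ∈ V, Real.exp (mmDot p z₀ + t * mmDot p d))
        - (mmDot y z₀ + t * mmDot y d) with hF1def
    have hF1 : ∀ t, F1 t = G (z₀ + t • d) := by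
      intro t
      simp only [hF1def, hGdef]
      congr 1
      · congr 1
        unfold mmW
        exact Finset.sum_congr rfl fun p _ => by rw [mmDot_add_smul]
      · rw [mmDot_add_smul]
    have hmin : IsLocalMin F1 0 := by
      apply Filter.Eventually.of_forall
      intro t
      rw [hF1 t, hF1 0]
      simp only [zero_smul, add_zero]
      exact hz₀ _
    have hDpos : 0 < ∑ p ∈ V, Real.exp (mmDot p z₀ + 0 * mmDot p d) :=
      Finset.sum_pos (fun p _ => Real.exp_pos _) hVne
    have hder : HasDerivAt F1
        ((∑ p ∈ V, Real.exp (mmDot p z₀ + 0 * mmDot p d) * mmDot p d)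
          / (∑ p ∈ V, Real.exp (mmDot p z₀ + 0 * mmDot p d)) - mmDot y d) 0 := by
      apply HasDerivAt.sub
      · exact (hasDerivAt_lineD (fun p => mmDot p z₀) (fun p => mmDot p d) 0).log
          (ne_of_gt hDpos)
      · exact (hasDerivAt_mul_const (mmDot y d)).const_add (mmDot y z₀)
    have hzero := hmin.deriv_eq_zero
    rw [hder.deriv] at hzero
    have hq := mmPhi_line (V := V) z₀ d 0
    rw [show z₀ + (0:ℝ) • d = z₀ by simp] at hq
    rw [hq]
    have : ∑ p ∈ V, mmDot p d * Real.exp (mmDot p z₀ + 0 * mmDot p d)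
        = ∑ p ∈ V, Real.exp (mmDot p z₀ + 0 * mmDot p d) * mmDot p d :=
      Finset.sum_congr rfl fun p _ => mul_comm _ _
    rw [this]
    linarith
  funext i
  have := hdir (Pi.single i 1)
  rwa [mmDot_single, mmDot_single] at this

end Surj

section Analytic
variable {n : ℕ} {V : Finset (Fin n → ℝ)}

lemma mmDot_analyticAt (p z : Fin n → ℝ) : AnalyticAt ℝ (fun z => mmDot p z) z :=
  Finset.analyticAt_fun_sum _ fun j _ => analyticAt_const.fun_mul
    (((ContinuousLinearMap.proj (R := ℝ) (φ := fun _ : Fin n => ℝ) j)).analyticAt z)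

lemma mmW_analyticAt (z : Fin n → ℝ) : AnalyticAt ℝ (mmW V) z :=
  Finset.analyticAt_fun_sum _ fun p _ => (mmDot_analyticAt p z).rexp

lemma mmPhi_analyticAt (hVne : V.Nonempty) (z : Fin n → ℝ) : AnalyticAt ℝ (mmPhi V) z := by
  apply AnalyticAt.fun_smul
  · exact (mmW_analyticAt z).inv (ne_of_gt (mmW_pos hVne z))
  · exact Finset.analyticAt_fun_sum _ fun p _ => (mmDot_analyticAt p z).rexp.smul analyticAt_const

lemma analyticAt_rlog {x : ℝ} (hx : 0 < x) : AnalyticAt ℝ Real.log x := by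
  have hc : AnalyticAt ℂ Complex.log (x : ℂ) :=
    analyticAt_clog (Complex.ofReal_mem_slitPlane.2 hx)
  have hres : AnalyticAt ℝ Complex.log ((x : ℝ) : ℂ) := hc.restrictScalars
  have hof : AnalyticAt ℝ (fun y : ℝ => (y : ℂ)) x := Complex.ofRealCLM.analyticAt x
  have h1 : AnalyticAt ℝ (fun y : ℝ => (Complex.log (y : ℂ)).re) x :=
    (Complex.reCLM.analyticAt _).comp (hres.comp hof)
  exact h1.congr (Filter.EventuallyEq.of_eq (funext fun y => Complex.log_ofReal_re y))

lemma orthant_isOpen : IsOpen {x : Fin n → ℝ | ∀ i, 0 < x i} := by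
  have h : {x : Fin n → ℝ | ∀ i, 0 < x i} = ⋂ i, {x | 0 < x i} := by ext; simp
  rw [h]
  exact isOpen_iInter_of_finite fun i => isOpen_lt continuous_const (continuous_apply i)

lemma psi17_eq {x : Fin n → ℝ} (hx : ∀ i, 0 < x i) :
    psi17 n V x = mmPhi V (fun i => Real.log (x i)) := by
  unfold psi17 mmPhi mmW
  have hprod : ∀ p : Fin n → ℝ,
      ∏ j, x j ^ p j = Real.exp (mmDot p (fun i => Real.log (x i))) := by
    intro p
    rw [mmDot, Real.exp_sum]
    exact Finset.prod_congr rfl fun j _ => by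
      rw [Real.rpow_def_of_pos (hx j), mul_comm]
  congr 1
  · congr 1
    exact Finset.sum_congr rfl fun p _ => hprod p
  · exact Finset.sum_congr rfl fun p _ => by rw [hprod p]

lemma psi17_analyticOnNhd (hVne : V.Nonempty) :
    AnalyticOnNhd ℝ (psi17 n V) {x : Fin n → ℝ | ∀ i, 0 < x i} := by
  intro x hx
  have hlog : AnalyticAt ℝ (fun x : Fin n → ℝ => fun i => Real.log (x i)) x := by
    apply AnalyticAt.pi
    intro i
    exact AnalyticAt.comp (f := fun x : Fin n → ℝ => x i) (g := Real.log)
      (analyticAt_rlog (hx i))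
      ((ContinuousLinearMap.proj (R := ℝ) (φ := fun _ : Fin n => ℝ) i).analyticAt x)
  apply ((mmPhi_analyticAt hVne _).comp hlog).congr
  filter_upwards [orthant_isOpen.mem_nhds hx] with y hy
  exact (psi17_eq hy).symm

end Analytic

section Inverse
variable {n : ℕ} {V : Finset (Fin n → ℝ)}

lemma lineQuot_deriv_pos (a b : (Fin n → ℝ) → ℝ) (hVne : V.Nonempty)
    (hb : ∃ p ∈ V, ∃ q ∈ V, b p ≠ b q) (t : ℝ) :
    0 < ((∑ p ∈ V, b p * (Real.exp (a p + t * b p) * b p))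
          * (∑ p ∈ V, Real.exp (a p + t * b p))
        - (∑ p ∈ V, b p * Real.exp (a p + t * b p))
          * (∑ p ∈ V, Real.exp (a p + t * b p) * b p))
        / (∑ p ∈ V, Real.exp (a p + t * b p)) ^ 2 := by
  apply div_pos
  · have h1 : ∑ p ∈ V, b p * (Real.exp (a p + t * b p) * b p)
        = ∑ p ∈ V, b p * b p * Real.exp (a p + t * b p) :=
      Finset.sum_congr rfl fun p _ => by ring
    have h2 : ∑ p ∈ V, Real.exp (a p + t * b p) * b p
        = ∑ p ∈ V, b p * Real.exp (a p + t * b p) :=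
      Finset.sum_congr rfl fun p _ => by ring
    rw [h1, h2, ← sq]
    exact variance_pos _ b (fun p _ => Real.exp_pos _) hb
  · have := Finset.sum_pos (fun p (_ : p ∈ V) => Real.exp_pos (a p + t * b p)) hVne
    positivity

lemma mmPhi_pairing_pos (hdim : (interior (convexHull ℝ (V : Set (Fin n → ℝ)))).Nonempty)
    (z : Fin n → ℝ) {d : Fin n → ℝ} (hd : d ≠ 0) :
    0 < mmDot (fderiv ℝ (mmPhi V) z d) d := by
  have hVne := V_nonempty hdim
  have hb := exists_dot_ne hdim hd
  have hdiff : DifferentiableAt ℝ (mmPhi V) z := (mmPhi_analyticAt hVne z).differentiableAt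
  have hcurve : HasDerivAt (fun t : ℝ => z + t • d) d 0 := by
    simpa using ((hasDerivAt_id (0:ℝ)).smul_const d).const_add z
  have hcomp : HasDerivAt (fun t : ℝ => mmPhi V (z + t • d)) (fderiv ℝ (mmPhi V) z d) 0 := by
    have hFz : HasFDerivAt (mmPhi V) (fderiv ℝ (mmPhi V) z) (z + (0:ℝ) • d) := by
      rw [show z + (0:ℝ) • d = z by simp]
      exact hdiff.hasFDerivAt
    exact hFz.comp_hasDerivAt 0 hcurve
  have hdot : HasDerivAt (fun t : ℝ => mmDot (mmPhi V (z + t • d)) d)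
      (mmDot (fderiv ℝ (mmPhi V) z d) d) 0 := by
    set lm : (Fin n → ℝ) →ₗ[ℝ] ℝ := (isLinearMap_mmDot_right d).mk' _ with hlm
    have hclm := (LinearMap.toContinuousLinearMap lm).hasFDerivAt
      (x := mmPhi V (z + (0:ℝ) • d))
    have := hclm.comp_hasDerivAt 0 hcomp
    exact this
  have hfun : (fun t : ℝ => mmDot (mmPhi V (z + t • d)) d)
      = fun t => (∑ p ∈ V, mmDot p d * Real.exp (mmDot p z + t * mmDot p d))
        / (∑ p ∈ V, Real.exp (mmDot p z + t * mmDot p d)) :=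
    funext fun t => mmPhi_line z d t
  rw [hfun] at hdot
  have hq := lineQuot_hasDerivAt (V := V) (fun p => mmDot p z) (fun p => mmDot p d) hVne 0
  have huniq := hdot.unique hq
  rw [huniq]
  exact lineQuot_deriv_pos _ _ hVne hb 0

lemma mmPhi_fderiv_injective (hdim : (interior (convexHull ℝ (V : Set (Fin n → ℝ)))).Nonempty)
    (z : Fin n → ℝ) : Function.Injective (fderiv ℝ (mmPhi V) z) := by
  have hker : ∀ d, fderiv ℝ (mmPhi V) z d = 0 → d = 0 := by
    intro d hLd
    by_contra hd
    have := mmPhi_pairing_pos hdim z hd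
    rw [hLd] at this
    simp [mmDot] at this
  intro d₁ d₂ h
  have hsub : fderiv ℝ (mmPhi V) z (d₁ - d₂) = 0 := by rw [map_sub, h, sub_self]
  exact sub_eq_zero.mp (hker _ hsub)

lemma mmPhi_invFun_analyticAt (hdim : (interior (convexHull ℝ (V : Set (Fin n → ℝ)))).Nonempty)
    (z : Fin n → ℝ) : AnalyticAt ℝ (Function.invFun (mmPhi V)) (mmPhi V z) := by
  have hVne := V_nonempty hdim
  have hinj := mmPhi_fderiv_injective hdim z
  set L : (Fin n → ℝ) →L[ℝ] (Fin n → ℝ) := fderiv ℝ (mmPhi V) z with hLdef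
  have hinj' : Function.Injective L.toLinearMap := hinj
  have hsurj' : Function.Surjective L.toLinearMap :=
    LinearMap.injective_iff_surjective.mp hinj'
  set ψ : (Fin n → ℝ) ≃ₗ[ℝ] (Fin n → ℝ) :=
    LinearEquiv.ofBijective L.toLinearMap ⟨hinj', hsurj'⟩ with hψdef
  set i : (Fin n → ℝ) ≃L[ℝ] (Fin n → ℝ) := ψ.toContinuousLinearEquiv with hidef
  have hieq : (i : (Fin n → ℝ) →L[ℝ] (Fin n → ℝ)) = L := by
    ext v
    rfl
  have hstrict : HasStrictFDerivAt (mmPhi V) (i : (Fin n → ℝ) →L[ℝ] (Fin n → ℝ)) z := by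
    obtain ⟨p, hp⟩ := mmPhi_analyticAt hVne z
    have h1 := hp.hasStrictFDerivAt
    have h2 : continuousMultilinearCurryFin1 ℝ (Fin n → ℝ) (Fin n → ℝ) (p 1)
        = fderiv ℝ (mmPhi V) z := hp.fderiv_eq.symm
    rw [hieq, hLdef, ← h2]
    exact h1
  set f := hstrict.toOpenPartialHomeomorph (mmPhi V) with hfdef
  have hzsrc : z ∈ f.source := hstrict.mem_toOpenPartialHomeomorph_source
  have hfeq : (f : (Fin n → ℝ) → (Fin n → ℝ)) = mmPhi V := hstrict.toOpenPartialHomeomorph_coe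
  have hsymm : AnalyticAt ℝ f.symm (f z) := by
    apply f.analyticAt_symm' (i := i) hzsrc
    · rw [hfeq]; exact mmPhi_analyticAt hVne z
    · rw [hfeq, ← hLdef, hieq]
  have hfz : f z = mmPhi V z := congrFun hfeq z
  rw [hfz] at hsymm
  apply hsymm.congr
  have htgt : mmPhi V z ∈ f.target := by
    rw [← hfz]; exact f.map_source hzsrc
  filter_upwards [f.open_target.mem_nhds htgt] with y' hy'
  have h1 : mmPhi V (f.symm y') = y' := by
    rw [← hfeq]; exact f.right_inv hy'
  calc f.symm y' = Function.invFun (mmPhi V) (mmPhi V (f.symm y')) :=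
        (Function.leftInverse_invFun (mmPhi_injective hdim) _).symm
  _ = Function.invFun (mmPhi V) y' := by rw [h1]

end Inverse


/-- For an `n`-dimensional convex compact polytope `P = conv(V)` in `ℝⁿ` with vertex set
`V`, the map `ψ_P` is a real analytic diffeomorphism from the open positive orthant onto
the interior of `P`: it is a bijection onto the interior, analytic, with analytic
inverse. -/
theorem stmt_17 (n : ℕ) (V : Finset (Fin n → ℝ))
    (hvert : ∀ v ∈ V, v ∉ convexHull ℝ ((V : Set (Fin n → ℝ)) \ {v}))
    (hdim : (interior (convexHull ℝ (V : Set (Fin n → ℝ)))).Nonempty) :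
    Set.BijOn (psi17 n V) {x : Fin n → ℝ | ∀ i, 0 < x i}
      (interior (convexHull ℝ (V : Set (Fin n → ℝ)))) ∧
    AnalyticOnNhd ℝ (psi17 n V) {x : Fin n → ℝ | ∀ i, 0 < x i} ∧
    ∃ g : (Fin n → ℝ) → (Fin n → ℝ),
      AnalyticOnNhd ℝ g (interior (convexHull ℝ (V : Set (Fin n → ℝ)))) ∧
      (∀ x : Fin n → ℝ, (∀ i, 0 < x i) → g (psi17 n V x) = x) ∧
      (∀ y ∈ interior (convexHull ℝ (V : Set (Fin n → ℝ))), psi17 n V (g y) = y) := by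
  have hVne := V_nonempty hdim
  refine ⟨⟨?_, ?_, ?_⟩, psi17_analyticOnNhd hVne, ?_⟩
  · intro x hx
    rw [psi17_eq hx]
    exact mmPhi_mem_interior hdim _
  · intro x₁ h₁ x₂ h₂ heq
    rw [psi17_eq h₁, psi17_eq h₂] at heq
    have hlg := mmPhi_injective hdim heq
    funext i
    have hi := congrFun hlg i
    calc x₁ i = Real.exp (Real.log (x₁ i)) := (Real.exp_log (h₁ i)).symm
    _ = Real.exp (Real.log (x₂ i)) := by rw [hi]
    _ = x₂ i := Real.exp_log (h₂ i)
  · intro y hy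
    obtain ⟨z, hz⟩ := mmPhi_surjOn hdim y hy
    refine ⟨fun i => Real.exp (z i), fun i => Real.exp_pos _, ?_⟩
    rw [psi17_eq (fun i => Real.exp_pos (z i))]
    simpa [Real.log_exp] using hz
  · refine ⟨fun y => fun i => Real.exp (Function.invFun (mmPhi V) y i), ?_, ?_, ?_⟩
    · intro y hy
      obtain ⟨z, hz⟩ := mmPhi_surjOn hdim y hy
      have hinv : AnalyticAt ℝ (Function.invFun (mmPhi V)) y :=
        hz ▸ mmPhi_invFun_analyticAt hdim z
      apply AnalyticAt.pi
      intro i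
      have h1 : AnalyticAt ℝ (fun y => Function.invFun (mmPhi V) y i) y :=
        AnalyticAt.comp (g := fun v : Fin n → ℝ => v i) (f := Function.invFun (mmPhi V))
          ((ContinuousLinearMap.proj (R := ℝ) (φ := fun _ : Fin n => ℝ) i).analyticAt _) hinv
      exact h1.rexp
    · intro x hx
      rw [psi17_eq hx]
      funext i
      show Real.exp (Function.invFun (mmPhi V) (mmPhi V fun j => Real.log (x j)) i) = x i
      rw [Function.leftInverse_invFun (mmPhi_injective hdim) (fun j => Real.log (x j))]
      exact Real.exp_log (hx i)
    · intro y hy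
      obtain ⟨z, hz⟩ := mmPhi_surjOn hdim y hy
      have hinveq : mmPhi V (Function.invFun (mmPhi V) y) = y := Function.invFun_eq ⟨z, hz⟩
      rw [psi17_eq (fun i => Real.exp_pos _)]
      simpa [Real.log_exp] using hinveq
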